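/- Let Λ be a finite simple graph and let Γ = {v} ∗ Λ be the cone over Λ, i.e., the graph obtained from Λ by adding a new vertex v adjacent to every vertex of Λ. Then BB(Γ) is isomorphic to A(Λ). -/

import Mathlib

def raagRels {V : Type} (G : SimpleGraph V) : Set (FreeGroup V) :=
  {r | ∃ v w : V, G.Adj v w ∧
    r = FreeGroup.of v * FreeGroup.of w * (FreeGroup.of v)⁻¹ * (FreeGroup.of w)⁻¹}

/-- The right-angled Artin group of a simple graph. -/
abbrev RAAG {V : Type} (G : SimpleGraph V) : Type := PresentedGroup (raagRels G)

/-- The canonical generator of `RAAG G` corresponding to a vertex. -/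
def raagGen {V : Type} (G : SimpleGraph V) (v : V) : RAAG G :=
  PresentedGroup.of (rels := raagRels G) v

/-- The homomorphism `A(Γ) → ℤ` sending every vertex generator to `1`. -/
def bbgChar {V : Type} (G : SimpleGraph V) : RAAG G →* Multiplicative ℤ :=
  PresentedGroup.toGroup (f := fun _ : V => Multiplicative.ofAdd (1 : ℤ)) (by
    rintro r ⟨v, w, -, rfl⟩
    simp only [map_mul, map_inv, FreeGroup.lift_apply_of]
    group)

/-- The Bestvina–Brady group of a simple graph, as a subgroup of the RAAG. -/
def BBG {V : Type} (G : SimpleGraph V) : Subgroup (RAAG G) := (bbgChar G).ker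

/-- The cone over a graph `G`: a new vertex (`none`) is added and joined to every vertex of
`G`. -/
def coneGraph {V : Type} (G : SimpleGraph V) : SimpleGraph (Option V) :=
  SimpleGraph.fromRel (fun x y =>
    x = none ∨ ∃ v w : V, x = some v ∧ y = some w ∧ G.Adj v w)

lemma raag_commute {V : Type} (G : SimpleGraph V) {v w : V} (h : G.Adj v w) :
    Commute (raagGen G v) (raagGen G w) := by
  rw [← commutatorElement_eq_one_iff_commute, commutatorElement_def]
  have hr : (FreeGroup.of v * FreeGroup.of w * (FreeGroup.of v)⁻¹ * (FreeGroup.of w)⁻¹) ∈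
      Subgroup.normalClosure (raagRels G) :=
    Subgroup.subset_normalClosure ⟨v, w, h, rfl⟩
  have h1 := (QuotientGroup.eq_one_iff _).mpr hr
  exact h1

lemma cone_adj_none {V : Type} (Λ : SimpleGraph V) (u : V) :
    (coneGraph Λ).Adj none (some u) := by
  simp [coneGraph, SimpleGraph.fromRel]

lemma cone_adj_some {V : Type} (Λ : SimpleGraph V) {u w : V} (h : Λ.Adj u w) :
    (coneGraph Λ).Adj (some u) (some w) := by
  refine ⟨by simpa using h.ne, Or.inl (Or.inr ⟨u, w, rfl, rfl, h⟩)⟩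

lemma v_central {V : Type} (Λ : SimpleGraph V) (g : RAAG (coneGraph Λ)) :
    Commute (raagGen (coneGraph Λ) none) g := by
  set v := raagGen (coneGraph Λ) none with hv
  have key : (MulAut.conj v).toMonoidHom = MonoidHom.id (RAAG (coneGraph Λ)) := by
    apply PresentedGroup.ext
    intro x
    cases x with
    | none =>
      show v * v * v⁻¹ = v
      exact mul_inv_cancel_right v v
    | some u =>
      have hc := (raag_commute _ (cone_adj_none Λ u)).eq
      show v * PresentedGroup.of (some u) * v⁻¹ = PresentedGroup.of (some u)
      rw [mul_inv_eq_iff_eq_mul]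
      exact hc
  have h2 := congrArg (fun f => f g) key
  simp only [MulEquiv.toMonoidHom_eq_coe, MonoidHom.coe_coe, MulAut.conj_apply,
    MonoidHom.id_apply] at h2
  exact mul_inv_eq_iff_eq_mul.mp h2

theorem stmt_3 {V : Type} [Fintype V] (Λ : SimpleGraph V) :
    Nonempty (↥(BBG (coneGraph Λ)) ≃* RAAG Λ) := by
  classical
  set vg : RAAG (coneGraph Λ) := raagGen (coneGraph Λ) none with hvg
  have c1 : ∀ z : RAAG (coneGraph Λ), Commute vg⁻¹ z := fun z => (v_central Λ z).inv_left
  -- φ : RAAG Λ →* RAAG (cone Λ)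
  have hφrel : ∀ r ∈ raagRels Λ, FreeGroup.lift
      (fun u : V => raagGen (coneGraph Λ) (some u) * vg⁻¹) r = 1 := by
    rintro r ⟨u, w, huw, rfl⟩
    simp only [map_mul, map_inv, FreeGroup.lift_apply_of]
    have h1 : Commute (raagGen (coneGraph Λ) (some u)) (raagGen (coneGraph Λ) (some w)) :=
      raag_commute _ (cone_adj_some Λ huw)
    have h4 : Commute (raagGen (coneGraph Λ) (some u) * vg⁻¹)
        (raagGen (coneGraph Λ) (some w) * vg⁻¹) :=
      Commute.mul_left (h1.mul_right (c1 _).symm) (c1 _)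
    rw [← commutatorElement_def, commutatorElement_eq_one_iff_commute]
    exact h4
  set φ : RAAG Λ →* RAAG (coneGraph Λ) := PresentedGroup.toGroup hφrel with hφ
  have hφof : ∀ u : V, φ (raagGen Λ u) = raagGen (coneGraph Λ) (some u) * vg⁻¹ := fun u =>
    PresentedGroup.toGroup.of hφrel
  -- ψ : RAAG (cone Λ) →* RAAG Λ
  have hψrel : ∀ r ∈ raagRels (coneGraph Λ), FreeGroup.lift
      (fun x : Option V => x.elim 1 (raagGen Λ)) r = 1 := by
    rintro r ⟨x, y, hxy, rfl⟩
    simp only [map_mul, map_inv, FreeGroup.lift_apply_of]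
    rw [← commutatorElement_def, commutatorElement_eq_one_iff_commute]
    match x, y with
    | none, y => exact Commute.one_left _
    | some u, none => exact Commute.one_right _
    | some u, some w =>
      have hadj : Λ.Adj u w ∨ Λ.Adj w u := by
        obtain ⟨-, h | h⟩ := hxy
        · rcases h with h | ⟨a, b, ha, hb, hab⟩
          · simp at h
          · injection ha with ha; injection hb with hb; subst ha; subst hb; exact Or.inl hab
        · rcases h with h | ⟨a, b, ha, hb, hab⟩
          · simp at h
          · injection ha with ha; injection hb with hb; subst ha; subst hb; exact Or.inr hab
      show Commute (raagGen Λ u) (raagGen Λ w)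
      rcases hadj with h | h
      · exact raag_commute _ h
      · exact (raag_commute _ h).symm
  set ψ : RAAG (coneGraph Λ) →* RAAG Λ := PresentedGroup.toGroup hψrel with hψ
  have hψof : ∀ x : Option V, ψ (PresentedGroup.of x) = x.elim 1 (raagGen Λ) := fun x =>
    PresentedGroup.toGroup.of hψrel
  -- ψ ∘ φ = id
  have hψφ : ψ.comp φ = MonoidHom.id (RAAG Λ) := by
    apply PresentedGroup.ext
    intro u
    simp only [MonoidHom.comp_apply, MonoidHom.id_apply]
    rw [show (PresentedGroup.of u : RAAG Λ) = raagGen Λ u from rfl, hφof, map_mul, map_inv]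
    rw [show (raagGen (coneGraph Λ) (some u)) = PresentedGroup.of (some u) from rfl, hψof]
    rw [hvg, show (raagGen (coneGraph Λ) none) = PresentedGroup.of none from rfl, hψof]
    simp [raagGen]
  -- bbgChar values
  have hcof : ∀ x : Option V, bbgChar (coneGraph Λ) (PresentedGroup.of x)
      = Multiplicative.ofAdd (1 : ℤ) := fun x => PresentedGroup.toGroup.of _
  have hcof' : ∀ x : Option V, bbgChar (coneGraph Λ) (raagGen (coneGraph Λ) x)
      = Multiplicative.ofAdd (1 : ℤ) := hcof
  -- the key retraction: for every g, g = φ (ψ g) * vg ^ (bbgChar g).toAdd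
  have key : ∀ g : RAAG (coneGraph Λ),
      g = φ (ψ g) * vg ^ (Multiplicative.toAdd (bbgChar (coneGraph Λ) g)) := by
    have hm : ∀ g h : RAAG (coneGraph Λ),
        φ (ψ (g * h)) * vg ^ (Multiplicative.toAdd (bbgChar (coneGraph Λ) (g * h)))
        = (φ (ψ g) * vg ^ (Multiplicative.toAdd (bbgChar (coneGraph Λ) g)))
          * (φ (ψ h) * vg ^ (Multiplicative.toAdd (bbgChar (coneGraph Λ) h))) := by
      intro g h
      have hcomm : Commute (vg ^ (Multiplicative.toAdd (bbgChar (coneGraph Λ) g))) (φ (ψ h)) :=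
        (v_central Λ (φ (ψ h))).zpow_left _
      rw [map_mul, map_mul, map_mul, toAdd_mul, zpow_add]
      exact hcomm.symm.mul_mul_mul_comm _ _
    let m : RAAG (coneGraph Λ) →* RAAG (coneGraph Λ) :=
      { toFun := fun g => φ (ψ g) * vg ^ (Multiplicative.toAdd (bbgChar (coneGraph Λ) g))
        map_one' := by simp
        map_mul' := hm }
    have : MonoidHom.id (RAAG (coneGraph Λ)) = m := by
      apply PresentedGroup.ext
      intro x
      show PresentedGroup.of x = φ (ψ (PresentedGroup.of x))
        * vg ^ (Multiplicative.toAdd ((bbgChar (coneGraph Λ)) (PresentedGroup.of x)))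
      rw [hψof, hcof]
      cases x with
      | none => simp [hvg, raagGen]
      | some u =>
        simp only [Option.elim]
        rw [hφof]
        simp [raagGen]
    intro g
    exact congrArg (fun f => f g) this
  -- φ lands in BBG
  have hmem : ∀ g : RAAG Λ, φ g ∈ BBG (coneGraph Λ) := by
    have : (bbgChar (coneGraph Λ)).comp φ = 1 := by
      apply PresentedGroup.ext
      intro u
      simp only [MonoidHom.comp_apply, MonoidHom.one_apply]
      rw [show (PresentedGroup.of u : RAAG Λ) = raagGen Λ u from rfl, hφof, map_mul, map_inv,
        hcof', hvg, hcof']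
      simp
    intro g
    have := congrArg (fun f => f g) this
    simpa [BBG, MonoidHom.mem_ker] using this
  let φ' : RAAG Λ →* ↥(BBG (coneGraph Λ)) := φ.codRestrict _ hmem
  have hbij : Function.Bijective φ' := by
    constructor
    · intro a b hab
      have h1 : φ a = φ b := congrArg Subtype.val hab
      have : ψ (φ a) = ψ (φ b) := congrArg ψ h1
      have ha := congrArg (fun f => f a) hψφ
      have hb := congrArg (fun f => f b) hψφ
      simp only [MonoidHom.comp_apply, MonoidHom.id_apply] at ha hb
      rw [ha, hb] at this
      exact this
    · rintro ⟨g, hg⟩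
      refine ⟨ψ g, ?_⟩
      have hg1 : bbgChar (coneGraph Λ) g = 1 := by simpa [BBG, MonoidHom.mem_ker] using hg
      have := key g
      rw [hg1] at this
      simp only [toAdd_one, zpow_zero, mul_one] at this
      exact Subtype.ext this.symm
  exact ⟨(MulEquiv.ofBijective φ' hbij).symm⟩
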